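/- Let n be a natural number and N = 2n. Let A be the unital associative ℝ-algebra presented by generators x_0, …, x_{N−1} subject to the relations: x_i² = 1 for all i; x_{2k}·x_{2k+1} = −x_{2k+1}·x_{2k} for every 0 ≤ k < n; and x_i·x_j = x_j·x_i for every other pair i ≠ j (i.e., whenever {i,j} is not of the form {2k, 2k+1}). Then A is isomorphic, as an ℝ-algebra, to the matrix algebra M_{2^n}(ℝ). (This algebra A is the twisted group algebra 𝒜_ℝ(μ_0^{2n}) attached to the quadratic form q_0^{2n}(x) = x_1x_2 + x_3x_4 + ⋯ + x_{2n−1}x_{2n} over the field of two elements.) -/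

import Mathlib

open Matrix

variable {n : ℕ}

def localOp (n : ℕ) (k : Fin n) (P : Matrix (Fin 2) (Fin 2) ℝ) :
    Matrix (Fin n → Fin 2) (Fin n → Fin 2) ℝ :=
  Matrix.of fun f g => if ∀ j, j ≠ k → f j = g j then P (f k) (g k) else 0

def multiOp (n : ℕ) (S : Finset (Fin n)) (P : Fin n → Matrix (Fin 2) (Fin 2) ℝ) :
    Matrix (Fin n → Fin 2) (Fin n → Fin 2) ℝ :=
  Matrix.of fun f g => if ∀ j ∉ S, f j = g j then ∏ k ∈ S, P k (f k) (g k) else 0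

lemma multiOp_empty (P) : multiOp n ∅ P = 1 := by
  ext f g
  have h : (∀ j ∉ (∅ : Finset (Fin n)), f j = g j) ↔ f = g := by simp [funext_iff]
  simp only [multiOp, Matrix.of_apply, Finset.prod_empty, Matrix.one_apply, h]

lemma multiOp_singleton (k : Fin n) (P) : multiOp n {k} P = localOp n k (P k) := by
  ext f g
  simp [multiOp, localOp]

lemma localOp_one (k : Fin n) : localOp n k 1 = 1 := by
  ext f g
  simp only [localOp, Matrix.of_apply, Matrix.one_apply]
  by_cases h : f = g
  · simp [h]
  · rw [if_neg h]
    by_cases h2 : ∀ j, j ≠ k → f j = g j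
    · rw [if_pos h2, if_neg]
      intro hk
      exact h (funext fun j => if hj : j = k then by rw [hj]; exact hk else h2 j hj)
    · rw [if_neg h2]

lemma localOp_smul (k : Fin n) (c : ℝ) (P) :
    localOp n k (c • P) = c • localOp n k P := by
  ext f g
  simp only [localOp, Matrix.of_apply, Matrix.smul_apply]
  by_cases h : ∀ j, j ≠ k → f j = g j <;> simp [h]

lemma localOp_add (k : Fin n) (P Q) :
    localOp n k (P + Q) = localOp n k P + localOp n k Q := by
  ext f g
  simp only [localOp, Matrix.of_apply, Matrix.add_apply]
  split_ifs <;> simp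

lemma localOp_neg (k : Fin n) (P) : localOp n k (-P) = -localOp n k P := by
  have := localOp_smul k (-1) P
  simpa using this

lemma localOp_mul_same (k : Fin n) (P Q) :
    localOp n k P * localOp n k Q = localOp n k (P * Q) := by
  ext f g
  rw [Matrix.mul_apply]
  have hinj : ∀ a ∈ (Finset.univ : Finset (Fin 2)), ∀ b ∈ Finset.univ,
      Function.update f k a = Function.update f k b → a = b := by
    intro a _ b _ hab
    have := congrFun hab k
    simpa using this
  rw [← Finset.sum_subset (Finset.subset_univ
      ((Finset.univ : Finset (Fin 2)).image (fun a => Function.update f k a))) ?_,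
    Finset.sum_image hinj]
  · simp only [localOp, Matrix.of_apply]
    have c1 : ∀ a : Fin 2, (∀ j, j ≠ k → f j = Function.update f k a j) := by
      intro a j hj; rw [Function.update_of_ne hj]
    have c2 : ∀ a : Fin 2, (∀ j, j ≠ k → Function.update f k a j = g j) ↔
        (∀ j, j ≠ k → f j = g j) := by
      intro a
      exact forall_congr' fun j => imp_congr_right fun hj => by rw [Function.update_of_ne hj]
    by_cases C : ∀ j, j ≠ k → f j = g j
    · rw [if_pos C, Matrix.mul_apply]
      refine Finset.sum_congr rfl fun a _ => ?_
      rw [if_pos (c1 a), if_pos ((c2 a).2 C), Function.update_self]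
    · rw [if_neg C]
      refine Finset.sum_eq_zero fun a _ => ?_
      rw [if_neg (fun h => C ((c2 a).1 h)), mul_zero]
  · intro h _ hh
    simp only [localOp, Matrix.of_apply]
    rw [if_neg, zero_mul]
    intro hc
    refine hh ?_
    simp only [Finset.mem_image, Finset.mem_univ, true_and]
    exact ⟨h k, funext fun j => by
      by_cases hj : j = k
      · rw [hj, Function.update_self]
      · rw [Function.update_of_ne hj]; exact hc j hj⟩

lemma localOp_mul_multiOp (a : Fin n) (S : Finset (Fin n)) (ha : a ∉ S) (P) :
    localOp n a (P a) * multiOp n S P = multiOp n (insert a S) P := by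
  ext f g
  rw [Matrix.mul_apply]
  rw [Fintype.sum_eq_single (Function.update f a (g a)) ?_]
  · simp only [localOp, multiOp, Matrix.of_apply]
    rw [if_pos (fun j hj => by rw [Function.update_of_ne hj])]
    rw [Function.update_self]
    have c2 : (∀ j ∉ S, Function.update f a (g a) j = g j) ↔
        (∀ j ∉ insert a S, f j = g j) := by
      constructor
      · intro h j hj
        rw [Finset.mem_insert, not_or] at hj
        have := h j hj.2
        rwa [Function.update_of_ne hj.1] at this
      · intro h j hj
        by_cases hja : j = a
        · rw [hja, Function.update_self]
        · rw [Function.update_of_ne hja]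
          exact h j (by simp [Finset.mem_insert, hja, hj])
    have cprod : (∏ k ∈ S, P k (Function.update f a (g a) k) (g k)) =
        ∏ k ∈ S, P k (f k) (g k) := by
      refine Finset.prod_congr rfl fun k hk => ?_
      rw [Function.update_of_ne (fun h => ha (by rw [← h]; exact hk))]
    rw [cprod]
    simp only [c2]
    by_cases C : ∀ j ∉ insert a S, f j = g j
    · rw [if_pos C, if_pos C, Finset.prod_insert ha]
    · rw [if_neg C, if_neg C, mul_zero]
  · intro h hh
    simp only [localOp, multiOp, Matrix.of_apply]
    by_cases c1 : ∀ j, j ≠ a → f j = h j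
    · by_cases c2 : ∀ j ∉ S, h j = g j
      · exfalso
        refine hh (funext fun j => ?_)
        by_cases hja : j = a
        · rw [hja, Function.update_self]
          exact c2 a ha
        · rw [Function.update_of_ne hja]
          exact (c1 j hja).symm
      · rw [if_neg c2, mul_zero]
    · rw [if_neg c1, zero_mul]

lemma localOp_comm (k l : Fin n) (hkl : k ≠ l) (P Q) :
    localOp n k P * localOp n l Q = localOp n l Q * localOp n k P := by
  set Ps : Fin n → Matrix (Fin 2) (Fin 2) ℝ :=
    Function.update (Function.update (fun _ => 1) k P) l Q with hPs
  have hk : Ps k = P := by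
    rw [hPs, Function.update_of_ne hkl, Function.update_self]
  have hl : Ps l = Q := by rw [hPs, Function.update_self]
  calc localOp n k P * localOp n l Q
      = localOp n k (Ps k) * multiOp n {l} Ps := by rw [hk, multiOp_singleton, hl]
    _ = multiOp n (insert k {l}) Ps := localOp_mul_multiOp k {l} (by simp [hkl]) Ps
    _ = multiOp n (insert l {k}) Ps := by
        have : (insert k {l} : Finset (Fin n)) = insert l {k} := by
          ext x; simp [or_comm]
        rw [this]
    _ = localOp n l (Ps l) * multiOp n {k} Ps :=
        (localOp_mul_multiOp l {k} (by simp [hkl.symm]) Ps).symm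
    _ = localOp n l Q * localOp n k P := by rw [hl, multiOp_singleton, hk]

def σz : Matrix (Fin 2) (Fin 2) ℝ := !![1, 0; 0, -1]
def σx : Matrix (Fin 2) (Fin 2) ℝ := !![0, 1; 1, 0]

lemma σz_sq : σz * σz = 1 := by
  ext i j
  fin_cases i <;> fin_cases j <;> norm_num [σz, σx, Matrix.single, Matrix.mul_apply, Fin.sum_univ_two,
      Matrix.one_apply, Matrix.smul_apply, Matrix.add_apply, Matrix.sub_apply]

lemma σx_sq : σx * σx = 1 := by
  ext i j
  fin_cases i <;> fin_cases j <;> norm_num [σz, σx, Matrix.single, Matrix.mul_apply, Fin.sum_univ_two,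
      Matrix.one_apply, Matrix.smul_apply, Matrix.add_apply, Matrix.sub_apply]

lemma zx_anti : σz * σx = -(σx * σz) := by
  ext i j
  fin_cases i <;> fin_cases j <;> norm_num [σz, σx, Matrix.single, Matrix.mul_apply, Fin.sum_univ_two,
      Matrix.one_apply, Matrix.smul_apply, Matrix.add_apply, Matrix.sub_apply, Matrix.neg_apply]

def localOpHom (n : ℕ) (k : Fin n) :
    Matrix (Fin 2) (Fin 2) ℝ →ₐ[ℝ] Matrix (Fin n → Fin 2) (Fin n → Fin 2) ℝ :=
  AlgHom.ofLinearMap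
    { toFun := localOp n k, map_add' := localOp_add k, map_smul' := localOp_smul k }
    (localOp_one k) (fun P Q => (localOp_mul_same k P Q).symm)

lemma adjoin_zx : Algebra.adjoin ℝ ({σz, σx} : Set (Matrix (Fin 2) (Fin 2) ℝ)) = ⊤ := by
  rw [eq_top_iff]
  intro M _
  have hz : σz ∈ Algebra.adjoin ℝ ({σz, σx} : Set (Matrix (Fin 2) (Fin 2) ℝ)) :=
    Algebra.subset_adjoin (by simp)
  have hx : σx ∈ Algebra.adjoin ℝ ({σz, σx} : Set (Matrix (Fin 2) (Fin 2) ℝ)) :=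
    Algebra.subset_adjoin (by simp)
  have h00 : Matrix.single 0 0 (1:ℝ) =
      (1/2 : ℝ) • (1 + σz) := by
    ext i j
    fin_cases i <;> fin_cases j <;> norm_num [σz, σx, Matrix.single, Matrix.mul_apply, Fin.sum_univ_two,
      Matrix.one_apply, Matrix.smul_apply, Matrix.add_apply, Matrix.sub_apply]
  have h11 : Matrix.single 1 1 (1:ℝ) =
      (1/2 : ℝ) • (1 - σz) := by
    ext i j
    fin_cases i <;> fin_cases j <;> norm_num [σz, σx, Matrix.single, Matrix.mul_apply, Fin.sum_univ_two,
      Matrix.one_apply, Matrix.smul_apply, Matrix.add_apply, Matrix.sub_apply]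
  have h01 : Matrix.single 0 1 (1:ℝ) =
      ((1/2 : ℝ) • (1 + σz)) * σx := by
    ext i j
    fin_cases i <;> fin_cases j <;> norm_num [σz, σx, Matrix.single, Matrix.mul_apply, Fin.sum_univ_two,
      Matrix.one_apply, Matrix.smul_apply, Matrix.add_apply, Matrix.sub_apply]
  have h10 : Matrix.single 1 0 (1:ℝ) =
      σx * ((1/2 : ℝ) • (1 + σz)) := by
    ext i j
    fin_cases i <;> fin_cases j <;> norm_num [σz, σx, Matrix.single, Matrix.mul_apply, Fin.sum_univ_two,
      Matrix.one_apply, Matrix.smul_apply, Matrix.add_apply, Matrix.sub_apply]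
  have hstd : ∀ i j : Fin 2, Matrix.single i j (1:ℝ) ∈
      Algebra.adjoin ℝ ({σz, σx} : Set (Matrix (Fin 2) (Fin 2) ℝ)) := by
    intro i j
    fin_cases i <;> fin_cases j
    · show Matrix.single (0 : Fin 2) (0 : Fin 2) (1:ℝ) ∈ _
      rw [h00]; exact Subalgebra.smul_mem _ (Subalgebra.add_mem _ (one_mem _) hz) _
    · show Matrix.single (0 : Fin 2) (1 : Fin 2) (1:ℝ) ∈ _
      rw [h01]
      exact Subalgebra.mul_mem _
        (Subalgebra.smul_mem _ (Subalgebra.add_mem _ (one_mem _) hz) _) hx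
    · show Matrix.single (1 : Fin 2) (0 : Fin 2) (1:ℝ) ∈ _
      rw [h10]
      exact Subalgebra.mul_mem _ hx
        (Subalgebra.smul_mem _ (Subalgebra.add_mem _ (one_mem _) hz) _)
    · show Matrix.single (1 : Fin 2) (1 : Fin 2) (1:ℝ) ∈ _
      rw [h11]; exact Subalgebra.smul_mem _ (Subalgebra.sub_mem _ (one_mem _) hz) _
  rw [Matrix.matrix_eq_sum_single M]
  refine Subalgebra.sum_mem _ fun i _ => Subalgebra.sum_mem _ fun j _ => ?_
  have : Matrix.single i j (M i j) = (M i j) • Matrix.single i j (1:ℝ) := by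
    rw [Matrix.smul_single, smul_eq_mul, mul_one]
  rw [this]
  exact Subalgebra.smul_mem _ (hstd i j) _

lemma multiOp_univ_stdBasis (f g : Fin n → Fin 2) :
    multiOp n Finset.univ (fun k => Matrix.single (f k) (g k) 1) =
      Matrix.single f g (1:ℝ) := by
  ext f' g'
  simp only [multiOp, Matrix.of_apply]
  rw [if_pos (fun j hj => absurd (Finset.mem_univ j) hj)]
  simp only [Matrix.single, Matrix.of_apply]
  rw [Finset.prod_boole]
  by_cases h : f = f' ∧ g = g'
  · rw [if_pos h, if_pos]
    intro i _
    exact ⟨congrFun h.1 i, congrFun h.2 i⟩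
  · rw [if_neg h, if_neg]
    intro hc
    exact h ⟨funext fun i => (hc i (Finset.mem_univ i)).1,
      funext fun i => (hc i (Finset.mem_univ i)).2⟩

/-- The relations presenting the twisted group algebra `𝒜_ℝ(μ₀^{2n})`:
generators `x_i` (`i : Fin (2n)`) with `x_i² = 1`, `x_{2k} x_{2k+1} = - x_{2k+1} x_{2k}`
for `k < n`, and `x_i x_j = x_j x_i` for every other pair `i ≠ j`. -/
inductive Rel10 (n : ℕ) : FreeAlgebra ℝ (Fin (2 * n)) → FreeAlgebra ℝ (Fin (2 * n)) → Prop
  | sq (i : Fin (2 * n)) :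
      Rel10 n (FreeAlgebra.ι ℝ i * FreeAlgebra.ι ℝ i) 1
  | anti (k : ℕ) (hk : k < n) :
      Rel10 n
        (FreeAlgebra.ι ℝ (⟨2 * k, by omega⟩ : Fin (2 * n)) *
          FreeAlgebra.ι ℝ (⟨2 * k + 1, by omega⟩ : Fin (2 * n)))
        (-(FreeAlgebra.ι ℝ (⟨2 * k + 1, by omega⟩ : Fin (2 * n)) *
          FreeAlgebra.ι ℝ (⟨2 * k, by omega⟩ : Fin (2 * n))))
  | comm (i j : Fin (2 * n)) (hij : i ≠ j)
      (h : ¬∃ k : ℕ, ((i : ℕ) = 2 * k ∧ (j : ℕ) = 2 * k + 1) ∨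
        ((i : ℕ) = 2 * k + 1 ∧ (j : ℕ) = 2 * k)) :
      Rel10 n (FreeAlgebra.ι ℝ i * FreeAlgebra.ι ℝ j) (FreeAlgebra.ι ℝ j * FreeAlgebra.ι ℝ i)

def gen (n : ℕ) (i : Fin (2 * n)) : Matrix (Fin n → Fin 2) (Fin n → Fin 2) ℝ :=
  localOp n ⟨i.val / 2, by have := i.isLt; omega⟩ (if i.val % 2 = 0 then σz else σx)

lemma gen_even (k : ℕ) (hk : k < n) :
    gen n ⟨2 * k, by omega⟩ = localOp n ⟨k, hk⟩ σz := by
  have h1 : ((⟨2 * k, by omega⟩ : Fin (2 * n)) : ℕ) % 2 = 0 := by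
    show 2 * k % 2 = 0; omega
  have h2 : ((⟨2 * k, by omega⟩ : Fin (2 * n)) : ℕ) / 2 = k := by
    show 2 * k / 2 = k; omega
  unfold gen
  rw [if_pos h1]
  simp only [h2]

lemma gen_odd (k : ℕ) (hk : k < n) :
    gen n ⟨2 * k + 1, by omega⟩ = localOp n ⟨k, hk⟩ σx := by
  have h1 : ¬((⟨2 * k + 1, by omega⟩ : Fin (2 * n)) : ℕ) % 2 = 0 := by
    show ¬(2 * k + 1) % 2 = 0; omega
  have h2 : ((⟨2 * k + 1, by omega⟩ : Fin (2 * n)) : ℕ) / 2 = k := by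
    show (2 * k + 1) / 2 = k; omega
  unfold gen
  rw [if_neg h1]
  simp only [h2]

lemma rel_check (n : ℕ) : ∀ ⦃x y⦄, Rel10 n x y →
    FreeAlgebra.lift ℝ (gen n) x = FreeAlgebra.lift ℝ (gen n) y := by
  intro x y r
  induction r with
  | sq i =>
    simp only [_root_.map_mul, _root_.map_one, FreeAlgebra.lift_ι_apply]
    unfold gen
    rw [localOp_mul_same]
    by_cases h : i.val % 2 = 0
    · rw [if_pos h, σz_sq, localOp_one]
    · rw [if_neg h, σx_sq, localOp_one]
  | anti k hk =>
    simp only [_root_.map_mul, _root_.map_neg, FreeAlgebra.lift_ι_apply]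
    rw [gen_even k hk, gen_odd k hk, localOp_mul_same, localOp_mul_same, ← localOp_neg,
      zx_anti]
  | comm i j hij h =>
    simp only [_root_.map_mul, FreeAlgebra.lift_ι_apply]
    unfold gen
    apply localOp_comm
    intro hc
    apply h
    have hv : (i : ℕ) / 2 = (j : ℕ) / 2 := congrArg Fin.val hc
    have hne : (i : ℕ) ≠ (j : ℕ) := fun hh => hij (Fin.ext hh)
    exact ⟨(i : ℕ) / 2, by omega⟩

noncomputable def φ (n : ℕ) :
    RingQuot (Rel10 n) →ₐ[ℝ] Matrix (Fin n → Fin 2) (Fin n → Fin 2) ℝ :=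
  RingQuot.liftAlgHom ℝ ⟨FreeAlgebra.lift ℝ (gen n), rel_check n⟩

lemma φ_gen (i : Fin (2 * n)) :
    φ n (RingQuot.mkAlgHom ℝ (Rel10 n) (FreeAlgebra.ι ℝ i)) = gen n i := by
  rw [φ, RingQuot.liftAlgHom_mkAlgHom_apply, FreeAlgebra.lift_ι_apply]

noncomputable def eg (n : ℕ) (i : Fin (2 * n)) : RingQuot (Rel10 n) :=
  RingQuot.mkAlgHom ℝ (Rel10 n) (FreeAlgebra.ι ℝ i)

lemma eg_sq (i : Fin (2 * n)) : eg n i * eg n i = 1 := by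
  have := RingQuot.mkAlgHom_rel ℝ (Rel10.sq i)
  simpa [eg, _root_.map_mul, _root_.map_one] using this

lemma eg_swap (i j : Fin (2 * n)) :
    ∃ c : ℝ, eg n i * eg n j = c • (eg n j * eg n i) := by
  by_cases hij : i = j
  · exact ⟨1, by rw [hij]; exact (one_smul ℝ _).symm⟩
  by_cases hp : ∃ k : ℕ, ((i : ℕ) = 2 * k ∧ (j : ℕ) = 2 * k + 1) ∨
      ((i : ℕ) = 2 * k + 1 ∧ (j : ℕ) = 2 * k)
  · obtain ⟨k, hk⟩ := hp
    have hkn : k < n := by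
      have hi := i.isLt
      have hj := j.isLt
      rcases hk with ⟨h1, h2⟩ | ⟨h1, h2⟩ <;> omega
    rcases hk with ⟨h1, h2⟩ | ⟨h1, h2⟩
    · have hi : i = ⟨2 * k, by omega⟩ := Fin.eq_mk_iff_val_eq.mpr h1
      have hj : j = ⟨2 * k + 1, by omega⟩ := Fin.eq_mk_iff_val_eq.mpr h2
      have := RingQuot.mkAlgHom_rel ℝ (Rel10.anti k hkn)
      refine ⟨-1, Eq.trans ?_ ((neg_one_smul ℝ (eg n j * eg n i)).symm :
        -(eg n j * eg n i) = (-1 : ℝ) • (eg n j * eg n i))⟩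
      rw [hi, hj]
      simpa [eg, _root_.map_mul, _root_.map_neg] using this
    · have hi : i = ⟨2 * k + 1, by omega⟩ := Fin.eq_mk_iff_val_eq.mpr h1
      have hj : j = ⟨2 * k, by omega⟩ := Fin.eq_mk_iff_val_eq.mpr h2
      have h := RingQuot.mkAlgHom_rel ℝ (Rel10.anti k hkn)
      have h' : eg n j * eg n i = -(eg n i * eg n j) := by
        rw [hi, hj]
        simpa [eg, _root_.map_mul, _root_.map_neg] using h
      refine ⟨-1, Eq.trans ?_ ((neg_one_smul ℝ (eg n j * eg n i)).symm :
        -(eg n j * eg n i) = (-1 : ℝ) • (eg n j * eg n i))⟩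
      rw [h', neg_neg]
  · have := RingQuot.mkAlgHom_rel ℝ (Rel10.comm i j hij hp)
    refine ⟨1, Eq.trans ?_ (one_smul ℝ _).symm⟩
    simpa [eg, _root_.map_mul] using this

noncomputable def mono (n : ℕ) (S : Finset (Fin (2 * n))) : RingQuot (Rel10 n) :=
  ((S.sort (· ≤ ·)).map (eg n)).prod

lemma mono_empty : mono n ∅ = 1 := by simp [mono]

lemma mono_singleton (j : Fin (2 * n)) : mono n {j} = eg n j := by
  simp [mono]

lemma mono_insert (a : Fin (2 * n)) (S : Finset (Fin (2 * n)))
    (h : ∀ b ∈ S, a ≤ b) (ha : a ∉ S) :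
    mono n (insert a S) = eg n a * mono n S := by
  rw [mono, mono, Finset.sort_insert (· ≤ ·) h ha, List.map_cons, List.prod_cons]


lemma eg_mul_mono (j : Fin (2 * n)) (S : Finset (Fin (2 * n))) :
    ∃ c : ℝ, eg n j * mono n S = c • mono n (symmDiff S {j}) := by
  induction S using Finset.strongInduction with
  | _ S IH =>
  rcases S.eq_empty_or_nonempty with rfl | hne
  · refine ⟨1, Eq.trans ?_ (one_smul ℝ _).symm⟩
    have hsd : symmDiff (∅ : Finset (Fin (2 * n))) {j} = {j} := by
      ext b; simp [Finset.mem_symmDiff]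
    rw [hsd, mono_singleton, mono_empty, mul_one]
  · set a := S.min' hne with ha
    have haS : a ∈ S := S.min'_mem hne
    have hES : S.erase a ⊂ S := Finset.erase_ssubset haS
    have hmin : ∀ b ∈ S.erase a, a < b := fun b hb =>
      lt_of_le_of_ne (S.min'_le b (Finset.mem_of_mem_erase hb))
        (Ne.symm (Finset.ne_of_mem_erase hb))
    have hSdec : mono n S = eg n a * mono n (S.erase a) := by
      conv_lhs => rw [← Finset.insert_erase haS]
      exact mono_insert a _ (fun b hb => le_of_lt (hmin b hb)) (Finset.notMem_erase a S)
    rcases lt_trichotomy j a with hja | hja | haj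
    · have hjS : j ∉ S := fun h => absurd (S.min'_le j h) (not_le.mpr hja)
      refine ⟨1, Eq.trans ?_ (one_smul ℝ _).symm⟩
      have hsd : symmDiff S {j} = insert j S := by
        ext b
        rw [Finset.mem_symmDiff]
        simp only [Finset.mem_singleton, Finset.mem_insert]
        constructor
        · rintro (⟨hb, _⟩ | ⟨rfl, _⟩)
          · exact Or.inr hb
          · exact Or.inl rfl
        · rintro (rfl | hb)
          · exact Or.inr ⟨rfl, hjS⟩
          · exact Or.inl ⟨hb, fun h => hjS (h ▸ hb)⟩
      rw [hsd, mono_insert j S (fun b hb => le_of_lt (lt_of_lt_of_le hja (S.min'_le b hb))) hjS]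
    · refine ⟨1, Eq.trans ?_ (one_smul ℝ _).symm⟩
      have hjS : j ∈ S := hja ▸ haS
      have hsd : symmDiff S {j} = S.erase j := by
        ext b
        rw [Finset.mem_symmDiff]
        simp only [Finset.mem_singleton, Finset.mem_erase]
        constructor
        · rintro (⟨hb, hbj⟩ | ⟨rfl, hbS⟩)
          · exact ⟨hbj, hb⟩
          · exact absurd hjS hbS
        · rintro ⟨hbj, hbS⟩
          exact Or.inl ⟨hbS, hbj⟩
      rw [hsd, hja, hSdec, ← mul_assoc, eg_sq, one_mul]
    · obtain ⟨c₀, hc₀⟩ := eg_swap j a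
      obtain ⟨c₁, hc₁⟩ := IH (S.erase a) hES
      have hmemT : ∀ b ∈ symmDiff (S.erase a) {j}, a < b := by
        intro b hb
        rw [Finset.mem_symmDiff] at hb
        rcases hb with ⟨hb, _⟩ | ⟨hb, _⟩
        · exact hmin b hb
        · rw [Finset.mem_singleton] at hb
          exact hb ▸ haj
      have haT : a ∉ symmDiff (S.erase a) {j} := fun h => lt_irrefl a (hmemT a h)
      have hins : insert a (symmDiff (S.erase a) {j}) = symmDiff S {j} := by
        have hne' : a ≠ j := ne_of_lt haj
        ext b
        simp only [Finset.mem_insert, Finset.mem_symmDiff, Finset.mem_singleton,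
          Finset.mem_erase]
        by_cases hb : b = a
        · subst hb
          simp [haS, hne']
        · simp only [hb, false_or]
          constructor
          · rintro (⟨⟨_, hbS⟩, hbj⟩ | ⟨rfl, hbE⟩)
            · exact Or.inl ⟨hbS, hbj⟩
            · exact Or.inr ⟨rfl, fun h => hbE ⟨hb, h⟩⟩
          · rintro (⟨hbS, hbj⟩ | ⟨rfl, hbS⟩)
            · exact Or.inl ⟨⟨hb, hbS⟩, hbj⟩
            · exact Or.inr ⟨rfl, fun h => hbS h.2⟩
      refine ⟨c₀ * c₁, ?_⟩
      calc eg n j * mono n S = eg n j * (eg n a * mono n (S.erase a)) := by rw [hSdec]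
        _ = (eg n j * eg n a) * mono n (S.erase a) := (mul_assoc _ _ _).symm
        _ = (c₀ • (eg n a * eg n j)) * mono n (S.erase a) := by rw [hc₀]
        _ = c₀ • ((eg n a * eg n j) * mono n (S.erase a)) := smul_mul_assoc _ _ _
        _ = c₀ • (eg n a * (eg n j * mono n (S.erase a))) :=
            congrArg (c₀ • ·) (mul_assoc _ _ _)
        _ = c₀ • (eg n a * (c₁ • mono n (symmDiff (S.erase a) {j}))) :=
            congrArg (c₀ • ·) (congrArg (eg n a * ·) hc₁)
        _ = c₀ • (c₁ • (eg n a * mono n (symmDiff (S.erase a) {j}))) :=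
            congrArg (c₀ • ·) (mul_smul_comm _ _ _)
        _ = (c₀ * c₁) • (eg n a * mono n (symmDiff (S.erase a) {j})) := smul_smul _ _ _
        _ = (c₀ * c₁) • mono n (insert a (symmDiff (S.erase a) {j})) :=
            congrArg ((c₀ * c₁) • ·)
              (mono_insert a _ (fun b hb => le_of_lt (hmemT b hb)) haT).symm
        _ = (c₀ * c₁) • mono n (symmDiff S {j}) := by rw [hins]

noncomputable def sm (n : ℕ) : Submodule ℝ (RingQuot (Rel10 n)) :=
  Submodule.span ℝ (Set.range (mono n))

lemma eg_mul_mem (j : Fin (2 * n)) {x} (hx : x ∈ sm n) : eg n j * x ∈ sm n := by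
  induction hx using Submodule.span_induction with
  | mem y hy =>
    obtain ⟨S, rfl⟩ := hy
    obtain ⟨c, hc⟩ := eg_mul_mono j S
    rw [hc]
    exact Submodule.smul_mem _ _ (Submodule.subset_span ⟨_, rfl⟩)
  | zero => rw [mul_zero]; exact zero_mem _
  | add y z _ _ hy hz => rw [mul_add]; exact add_mem hy hz
  | smul c y _ hy =>
    have h : eg n j * (c • y) = c • (eg n j * y) := mul_smul_comm c _ y
    rw [h]
    exact Submodule.smul_mem _ _ hy

lemma mk_mul_mem (x : FreeAlgebra ℝ (Fin (2 * n))) :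
    ∀ m ∈ sm n, RingQuot.mkAlgHom ℝ (Rel10 n) x * m ∈ sm n := by
  induction x using FreeAlgebra.induction with
  | grade0 r =>
    intro m hm
    rw [AlgHom.commutes]
    have h : algebraMap ℝ (RingQuot (Rel10 n)) r * m = r • m := (Algebra.smul_def r m).symm
    rw [h]
    exact Submodule.smul_mem _ _ hm
  | grade1 i => exact fun m hm => eg_mul_mem i hm
  | mul x y hx hy =>
    intro m hm
    rw [_root_.map_mul, mul_assoc]
    exact hx _ (hy _ hm)
  | add x y hx hy =>
    intro m hm
    rw [_root_.map_add, add_mul]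
    exact add_mem (hx _ hm) (hy _ hm)

lemma one_mem_sm : (1 : RingQuot (Rel10 n)) ∈ sm n :=
  Submodule.subset_span ⟨∅, mono_empty⟩

lemma sm_top : sm n = ⊤ := by
  rw [eq_top_iff]
  rintro a -
  obtain ⟨x, rfl⟩ := RingQuot.mkAlgHom_surjective ℝ (Rel10 n) a
  simpa using mk_mul_mem x 1 one_mem_sm

lemma fd (n : ℕ) : FiniteDimensional ℝ (RingQuot (Rel10 n)) :=
  ⟨Submodule.fg_def.mpr ⟨Set.range (mono n), Set.finite_range _, sm_top⟩⟩

lemma finrank_quot_le (n : ℕ) :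
    Module.finrank ℝ (RingQuot (Rel10 n)) ≤ 2 ^ n * 2 ^ n := by
  classical
  haveI := fd n
  haveI : Fintype (Set.range (mono n)) := (Set.finite_range _).fintype
  have h1 := finrank_span_le_card (R := ℝ) (Set.range (mono n))
  have h2 : (Set.range (mono n)).toFinset.card ≤ Fintype.card (Finset (Fin (2 * n))) := by
    rw [Set.toFinset_card]
    exact Fintype.card_range_le _
  have h3 : Fintype.card (Finset (Fin (2 * n))) = 2 ^ n * 2 ^ n := by
    rw [Fintype.card_finset]
    simp [two_mul, pow_add]
  have h4 : Module.finrank ℝ (RingQuot (Rel10 n)) = Module.finrank ℝ (sm n) := by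
    rw [sm_top]
    exact (finrank_top ℝ _).symm
  rw [h4]
  exact le_trans h1 (le_trans h2 (le_of_eq h3))

lemma finrank_mat (n : ℕ) :
    Module.finrank ℝ (Matrix (Fin n → Fin 2) (Fin n → Fin 2) ℝ) = 2 ^ n * 2 ^ n := by
  rw [Module.finrank_matrix]
  simp [Fintype.card_fun]

lemma gen_mem (i : Fin (2 * n)) : gen n i ∈ (φ n).range := ⟨_, φ_gen i⟩

lemma localOp_z_mem (k : Fin n) : localOp n k σz ∈ (φ n).range := by
  have h := gen_mem (n := n) ⟨2 * k.val, by have := k.isLt; omega⟩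
  rwa [gen_even k.val k.isLt, Fin.eta] at h

lemma localOp_x_mem (k : Fin n) : localOp n k σx ∈ (φ n).range := by
  have h := gen_mem (n := n) ⟨2 * k.val + 1, by have := k.isLt; omega⟩
  rwa [gen_odd k.val k.isLt, Fin.eta] at h

lemma localOp_mem (k : Fin n) (P) : localOp n k P ∈ (φ n).range := by
  have hP : P ∈ Algebra.adjoin ℝ ({σz, σx} : Set (Matrix (Fin 2) (Fin 2) ℝ)) := by
    rw [adjoin_zx]; trivial
  have hmem : localOpHom n k P ∈
      (Algebra.adjoin ℝ ({σz, σx} : Set (Matrix (Fin 2) (Fin 2) ℝ))).map (localOpHom n k) :=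
    ⟨P, hP, rfl⟩
  rw [AlgHom.map_adjoin] at hmem
  refine Algebra.adjoin_le ?_ hmem
  rintro y ⟨m, hm, rfl⟩
  simp only [Set.mem_insert_iff, Set.mem_singleton_iff] at hm
  rcases hm with rfl | rfl
  · exact localOp_z_mem k
  · exact localOp_x_mem k

lemma multiOp_mem (S : Finset (Fin n)) (P) : multiOp n S P ∈ (φ n).range := by
  induction S using Finset.induction_on with
  | empty => rw [multiOp_empty]; exact one_mem _
  | @insert a S ha ih =>
    rw [← localOp_mul_multiOp a S ha]
    exact mul_mem (localOp_mem a (P a)) ih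

lemma φ_surjective (n : ℕ) : Function.Surjective (φ n) := by
  have hr : (φ n).range = ⊤ := by
    rw [eq_top_iff]
    rintro M -
    rw [Matrix.matrix_eq_sum_single M]
    refine sum_mem fun f _ => sum_mem fun g _ => ?_
    have h1 : Matrix.single f g (M f g) =
        (M f g) • Matrix.single f g (1 : ℝ) := by
      rw [Matrix.smul_single, smul_eq_mul, mul_one]
    rw [h1, ← multiOp_univ_stdBasis f g]
    exact Subalgebra.smul_mem _ (multiOp_mem _ _) _
  intro M
  have hM : M ∈ (φ n).range := by rw [hr]; trivial
  obtain ⟨x, hx⟩ := hM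
  exact ⟨x, hx⟩

theorem twisted_mu0_even_iso_matrix_real (n : ℕ) :
    Nonempty (RingQuot (Rel10 n) ≃ₐ[ℝ] Matrix (Fin (2 ^ n)) (Fin (2 ^ n)) ℝ) := by
  haveI := fd n
  have hsurj := φ_surjective n
  have hranktop : LinearMap.range (φ n).toLinearMap = ⊤ := LinearMap.range_eq_top.mpr hsurj
  have hle1 : Module.finrank ℝ (Matrix (Fin n → Fin 2) (Fin n → Fin 2) ℝ) ≤
      Module.finrank ℝ (RingQuot (Rel10 n)) := by
    have h := LinearMap.finrank_range_le (φ n).toLinearMap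
    rwa [hranktop, finrank_top] at h
  have heq : Module.finrank ℝ (RingQuot (Rel10 n)) =
      Module.finrank ℝ (Matrix (Fin n → Fin 2) (Fin n → Fin 2) ℝ) :=
    le_antisymm (le_trans (finrank_quot_le n) (le_of_eq (finrank_mat n).symm)) hle1
  have hinj : Function.Injective (φ n) :=
    (LinearMap.injective_iff_surjective_of_finrank_eq_finrank
      (f := (φ n).toLinearMap) heq).mpr hsurj
  have ecard : Fintype.card (Fin n → Fin 2) = 2 ^ n := by simp
  exact ⟨(AlgEquiv.ofBijective (φ n) ⟨hinj, hsurj⟩).trans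
    (Matrix.reindexAlgEquiv ℝ ℝ (Fintype.equivFinOfCardEq ecard))⟩
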